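/- Let A : H → 2^H with zer A ≠ ∅ and M an admissible preconditioner such that M⁻¹A is M-monotone. Let T = (M+A)⁻¹M and let u^{k+1} = u^k + λ_k(T u^k − u^k) with λ_k ∈ [0,2] and Σ_k λ_k(2−λ_k) = +∞. Then {u^k} is M-Fejér monotone with respect to Fix T (‖u^{k+1} − u‖_M ≤ ‖u^k − u‖_M for all k and all u ∈ Fix T) and M-asymptotically regular (‖T u^k − u^k‖_M → 0). -/

import Mathlib

open Filter

/-- The PPP iterates are `M`-Fejér monotone w.r.t. `Fix T` and `M`-asymptotically regular. -/
theorem stmt5 {H : Type} [NormedAddCommGroup H] [InnerProductSpace ℝ H] [CompleteSpace H]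
    (A : Set (H × H)) (M : H →L[ℝ] H) (T : H → H)
    (hMsa : ∀ x y : H, (inner ℝ (M x) y : ℝ) = inner ℝ x (M y))
    (hMpos : ∀ x : H, 0 ≤ (inner ℝ (M x) x : ℝ))
    -- admissibility: `T = (M+A)⁻¹ M`, single-valued with full domain
    (hT : ∀ u : H, (T u, M (u - T u)) ∈ A)
    (hTuniq : ∀ u v : H, (v, M (u - v)) ∈ A → v = T u)
    -- `M⁻¹A` is `M`-monotone
    (hmono : ∀ u v u' v' : H, (u, M v) ∈ A → (u', M v') ∈ A →
        0 ≤ (inner ℝ (M (v - v')) (u - u') : ℝ))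
    -- `zer A ≠ ∅`
    (hzer : ∃ x : H, (x, (0 : H)) ∈ A)
    (lam : ℕ → ℝ) (hlam : ∀ k, lam k ∈ Set.Icc (0 : ℝ) 2)
    (hdiv : Tendsto (fun n => ∑ k ∈ Finset.range n, lam k * (2 - lam k)) atTop atTop)
    (u : ℕ → H) (hiter : ∀ k, u (k + 1) = u k + lam k • (T (u k) - u k)) :
    (∀ k : ℕ, ∀ v : H, T v = v →
        Real.sqrt (inner ℝ (M (u (k + 1) - v)) (u (k + 1) - v))
          ≤ Real.sqrt (inner ℝ (M (u k - v)) (u k - v))) ∧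
    Tendsto (fun k => Real.sqrt (inner ℝ (M (T (u k) - u k)) (T (u k) - u k))) atTop (nhds 0) := by
  obtain ⟨z, hzA⟩ := hzer
  have hzfix : T z = z := by
    refine (hTuniq z z ?_).symm
    simpa using hzA
  set Q : H → ℝ := fun x => inner ℝ (M x) x with hQdef
  have hQnn : ∀ x, 0 ≤ Q x := hMpos
  have hsym : ∀ x y : H, (inner ℝ (M x) y : ℝ) = inner ℝ (M y) x := fun x y => by
    rw [hMsa, real_inner_comm]
  have hexp : ∀ (x y : H) (t : ℝ), Q (x + t • y)
      = Q x + 2 * t * (inner ℝ (M x) y : ℝ) + t ^ 2 * Q y := by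
    intro x y t
    simp only [hQdef, map_add, map_smul, inner_add_left, inner_add_right,
      real_inner_smul_left, real_inner_smul_right]
    rw [hsym y x]; ring
  have hexpsub : ∀ x y : H, Q (x - y) = Q x - 2 * (inner ℝ (M x) y : ℝ) + Q y := by
    intro x y
    have := hexp x y (-1)
    simpa [sub_eq_add_neg] using this
  -- key inequality at a fixed point
  have hkey : ∀ (k : ℕ) (v : H), T v = v →
      (inner ℝ (M (T (u k) - u k)) (u k - v) : ℝ) ≤ - Q (T (u k) - u k) := by
    intro k v hv
    have h1 := hmono (T (u k)) (u k - T (u k)) (T v) (v - T v) (hT (u k)) (hT v)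
    rw [hv] at h1
    have e1 : (u k - T (u k)) - (v - v) = -(T (u k) - u k) := by abel
    have e2 : T (u k) - v = (T (u k) - u k) + (u k - v) := by abel
    rw [e1, e2, map_neg, inner_neg_left, inner_add_right] at h1
    simp only [hQdef]
    linarith
  -- Fejér step
  have hstep : ∀ (k : ℕ) (v : H), T v = v →
      Q (u (k + 1) - v) ≤ Q (u k - v) - lam k * (2 - lam k) * Q (T (u k) - u k) := by
    intro k v hv
    have h4 : u (k + 1) - v = (u k - v) + lam k • (T (u k) - u k) := by
      rw [hiter k]; abel
    rw [h4, hexp]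
    have hk := hkey k v hv
    rw [hsym (u k - v) (T (u k) - u k)]
    have h0 := (hlam k).1
    have h2 := (hlam k).2
    nlinarith [hQnn (T (u k) - u k), mul_nonneg h0 (neg_nonneg.mpr (by linarith : (inner ℝ (M (T (u k) - u k)) (u k - v) : ℝ) + Q (T (u k) - u k) ≤ 0))]
  -- Q (w k) is nonincreasing
  have hwmono : ∀ k, Q (T (u (k + 1)) - u (k + 1)) ≤ Q (T (u k) - u k) := by
    intro k
    rcases eq_or_lt_of_le (hlam k).1 with h0 | hpos
    · have he : u (k + 1) = u k := by rw [hiter k, ← h0, zero_smul, add_zero]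
      rw [he]
    · have h1 := hmono (T (u (k + 1))) (u (k + 1) - T (u (k + 1)))
        (T (u k)) (u k - T (u k)) (hT _) (hT _)
      have e1 : (u (k + 1) - T (u (k + 1))) - (u k - T (u k))
          = (T (u k) - u k) - (T (u (k + 1)) - u (k + 1)) := by abel
      have e2 : T (u (k + 1)) - T (u k)
          = ((T (u (k + 1)) - u (k + 1)) - (T (u k) - u k)) + lam k • (T (u k) - u k) := by
        rw [hiter k]; abel
      rw [e1, e2] at h1
      set a := T (u k) - u k with ha
      set b := T (u (k + 1)) - u (k + 1) with hb
      rw [inner_add_right, real_inner_smul_right] at h1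
      have e3 : (inner ℝ (M (a - b)) (b - a) : ℝ) = -(Q a - 2 * (inner ℝ (M a) b : ℝ) + Q b) := by
        have hba : (b - a : H) = -(a - b) := by abel
        rw [hba, inner_neg_right]
        show -(Q (a - b)) = _
        rw [hexpsub a b]
      have e4 : (inner ℝ (M (a - b)) a : ℝ) = Q a - (inner ℝ (M b) a : ℝ) := by
        rw [map_sub, inner_sub_left]
      rw [e3, e4] at h1
      rw [hsym b a] at h1
      have hQd := hQnn (a - b)
      rw [hexpsub] at hQd
      have h2 := (hlam k).2
      nlinarith [mul_nonneg (le_of_lt hpos) hQd, mul_nonneg (by linarith : (0:ℝ) ≤ 2 - lam k) hQd]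
  have hanti : ∀ m n : ℕ, m ≤ n → Q (T (u n) - u n) ≤ Q (T (u m) - u m) :=
    fun m n h => antitone_nat_of_succ_le (f := fun k => Q (T (u k) - u k)) hwmono h
  -- summability bound
  have hsum : ∀ n, ∑ k ∈ Finset.range n, lam k * (2 - lam k) * Q (T (u k) - u k)
      + Q (u n - z) ≤ Q (u 0 - z) := by
    intro n
    induction n with
    | zero => simp
    | succ n ih =>
      rw [Finset.sum_range_succ]
      have := hstep n z hzfix
      linarith
  have hbound : ∀ n, Q (T (u n) - u n) * (∑ k ∈ Finset.range n, lam k * (2 - lam k))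
      ≤ Q (u 0 - z) := by
    intro n
    calc Q (T (u n) - u n) * (∑ k ∈ Finset.range n, lam k * (2 - lam k))
        = ∑ k ∈ Finset.range n, Q (T (u n) - u n) * (lam k * (2 - lam k)) := by
          rw [Finset.mul_sum]
      _ ≤ ∑ k ∈ Finset.range n, lam k * (2 - lam k) * Q (T (u k) - u k) := by
          refine Finset.sum_le_sum fun k hk => ?_
          have hk' : k ≤ n := le_of_lt (Finset.mem_range.mp hk)
          have h1 : 0 ≤ lam k * (2 - lam k) :=
            mul_nonneg (hlam k).1 (by linarith [(hlam k).2])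
          have h2 := hanti k n hk'
          nlinarith
      _ ≤ Q (u 0 - z) := by
          have := hsum n
          have := hQnn (u n - z)
          linarith
  have hQ0 : Tendsto (fun n => Q (T (u n) - u n)) atTop (nhds 0) := by
    have hpos : ∀ᶠ n in atTop, 0 < ∑ k ∈ Finset.range n, lam k * (2 - lam k) :=
      hdiv.eventually_gt_atTop 0
    have hg : Tendsto (fun n => Q (u 0 - z) / ∑ k ∈ Finset.range n, lam k * (2 - lam k))
        atTop (nhds 0) := tendsto_const_nhds.div_atTop hdiv
    refine squeeze_zero' (Eventually.of_forall fun n => hQnn _)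
      (hpos.mono fun n hn => ?_) hg
    exact (le_div_iff₀ hn).mpr (hbound n)
  constructor
  · intro k v hv
    show Real.sqrt (Q (u (k + 1) - v)) ≤ Real.sqrt (Q (u k - v))
    apply Real.sqrt_le_sqrt
    have := hstep k v hv
    have h1 : 0 ≤ lam k * (2 - lam k) * Q (T (u k) - u k) :=
      mul_nonneg (mul_nonneg (hlam k).1 (by linarith [(hlam k).2])) (hQnn _)
    linarith
  · show Tendsto (fun k => Real.sqrt (Q (T (u k) - u k))) atTop (nhds 0)
    have := hQ0.sqrt
    simpa using this
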